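/- arXiv:1306.3659 — 3 statements merged into one kernel-verified Lean document; each statement's English description precedes it below -/
import Mathlib

section
/- Let 0 < λ < 1/2 and let U^λ be defined as in the three-region formula above on [0,1] × ℝ. Then for all x ∈ [0,1] and y ∈ ℝ, U^λ(x,y) ≥ (|y| - λ)_+ · (1 - x), where t_+ = max(t,0). -/
noncomputable def Usmall (l : ℝ) (x y : ℝ) : ℝ :=
  if x + |y| ≤ 2*l then (4*l)⁻¹ * (y^2 - x^2) + (l - Real.log (2*l)) * x
  else if x + |y| ≤ 1 then |y| - l + l*x - x * Real.log (x + |y|)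
  else (1 - x) * (x + |y| - l)

theorem Usmall_majorization (l : ℝ) (hl0 : 0 < l) (hl : l < 1/2) :
    ∀ x y : ℝ, x ∈ Set.Icc (0:ℝ) 1 →
      Usmall l x y ≥ max (|y| - l) 0 * (1 - x) := by
  rintro x y ⟨hx0, hx1⟩
  have ha : 0 ≤ |y| := abs_nonneg y
  have hsq : |y|^2 = y^2 := sq_abs y
  unfold Usmall
  split_ifs with h1 h2
  · -- region 1 : x + |y| ≤ 2l
    have hlog : Real.log (2*l) ≤ 2*l - 1 := Real.log_le_sub_one_of_pos (by linarith)
    have h4 : (0:ℝ) < 4*l := by linarith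
    rw [ge_iff_le, ← sub_nonneg]
    have key : (4*l)⁻¹ * (y^2 - x^2) + (l - Real.log (2*l)) * x - max (|y| - l) 0 * (1-x)
        = ((y^2 - x^2) + ((l - Real.log (2*l)) * x - max (|y| - l) 0 * (1-x)) * (4*l)) / (4*l) := by
      field_simp
      ring
    rw [key]
    apply div_nonneg _ h4.le
    rcases le_total (|y|) l with hyl | hyl
    · rw [max_eq_right (by linarith)]
      nlinarith [mul_nonneg hx0 (show (0:ℝ) ≤ 2*l - |y| - x by linarith),
        mul_nonneg hx0 (show (0:ℝ) ≤ l - Real.log (2*l) - (1-l) by linarith),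
        mul_nonneg hx0 ha, mul_nonneg hx0 (show (0:ℝ) ≤ 2*l - 4*l^2 by nlinarith),
        sq_nonneg (|y| - 2*l)]
    · rw [max_eq_left (by linarith)]
      nlinarith [mul_nonneg (show (0:ℝ) ≤ 2*l - |y| - x by linarith)
          (show (0:ℝ) ≤ 2*l - |y| + x by linarith),
        mul_nonneg hx0 (show (0:ℝ) ≤ l - Real.log (2*l) - (1-l) by linarith),
        mul_nonneg (mul_nonneg hl0.le hx0) (show (0:ℝ) ≤ 1 - 2*l + |y| by linarith)]
  · -- region 2 : 2l < x + |y| ≤ 1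
    have hgt : 2*l < x + |y| := not_le.mp h1
    have hpos : 0 < x + |y| := by linarith
    have hlog : Real.log (x+|y|) ≤ (x+|y|) - 1 := Real.log_le_sub_one_of_pos hpos
    rcases le_total (|y|) l with hyl | hyl
    · rw [max_eq_right (by linarith)]
      nlinarith [mul_le_mul_of_nonneg_left hlog hx0,
        mul_nonneg (show (0:ℝ) ≤ x + |y| - 2*l by linarith)
          (show (0:ℝ) ≤ 1 - (x + |y|) by linarith),
        mul_nonneg ha (show (0:ℝ) ≤ x + |y| - 2*l by linarith),
        mul_nonneg hx0 ha]
    · rw [max_eq_left (by linarith)]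
      have hlog0 : Real.log (x+|y|) ≤ 0 := Real.log_nonpos (by linarith) h2
      nlinarith [mul_nonneg hx0 ha, mul_nonneg hx0 (neg_nonneg.mpr hlog0)]
  · -- region 3 : x + |y| > 1
    have hgt : 1 < x + |y| := not_le.mp h2
    have hm : max (|y| - l) 0 ≤ x + |y| - l := max_le (by linarith) (by linarith)
    nlinarith [mul_le_mul_of_nonneg_left hm (show (0:ℝ) ≤ 1 - x by linarith)]
end

section
/- Let 0 < λ < 1/2 and suppose 2λ < x + |y| < 1 with x ∈ (0,1), y ∈ ℝ \ {0}. For U^λ(x,y) = |y| - λ + λx - x·ln(x + |y|), the second-order expression ∂_{xx}U^λ·h² + 2∂_{xy}U^λ·hk + ∂_{yy}U^λ·k² equals -(x+|y|)^{-1}(h² - k²) - |y|(x+|y|)^{-2}(h + sgn(y)·k)² for all h, k ∈ ℝ; in particular it is at most -(x+|y|)^{-1}(h² - k²). -/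
theorem hessian_middle_region (l x y h k : ℝ) (hl0 : 0 < l) (hl : l < 1/2)
    (hx : x ∈ Set.Ioo (0:ℝ) 1) (hy : y ≠ 0)
    (hreg1 : 2*l < x + |y|) (hreg2 : x + |y| < 1) :
    (fderiv ℝ (fun p : ℝ × ℝ =>
        fderiv ℝ (fun q : ℝ × ℝ => |q.2| - l + l*q.1 - q.1 * Real.log (q.1 + |q.2|)) p (h, k))
      (x, y)) (h, k)
      = -(x + |y|)⁻¹ * (h^2 - k^2) - |y| / (x + |y|)^2 * (h + Real.sign y * k)^2 ∧
    (fderiv ℝ (fun p : ℝ × ℝ =>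
        fderiv ℝ (fun q : ℝ × ℝ => |q.2| - l + l*q.1 - q.1 * Real.log (q.1 + |q.2|)) p (h, k))
      (x, y)) (h, k)
      ≤ -(x + |y|)⁻¹ * (h^2 - k^2) := by
  set s := Real.sign y with hs_def
  have hs2 : s * s = 1 := by
    rcases lt_or_gt_of_ne hy with hneg | hpos
    · rw [hs_def, Real.sign_of_neg hneg]; ring
    · rw [hs_def, Real.sign_of_pos hpos]; ring
  have hsy : s * y = |y| := by
    rcases lt_or_gt_of_ne hy with hneg | hpos
    · rw [hs_def, Real.sign_of_neg hneg, abs_of_neg hneg]; ring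
    · rw [hs_def, Real.sign_of_pos hpos, abs_of_pos hpos]; ring
  have hy0 : 0 < |y| := abs_pos.mpr hy
  have hu0 : 0 < x + |y| := add_pos hx.1 hy0
  set V : Set (ℝ × ℝ) := {q | 0 < s * q.2 ∧ 0 < q.1 + s * q.2} with hV_def
  have hVopen : IsOpen V := by
    apply IsOpen.inter
    · exact isOpen_lt continuous_const (continuous_const.mul continuous_snd)
    · exact isOpen_lt continuous_const (continuous_fst.add (continuous_const.mul continuous_snd))
  have hxyV : (x, y) ∈ V := by
    constructor
    · simpa [hsy] using hy0
    · simpa [hsy] using hu0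
  have habs : ∀ q ∈ V, |q.2| = s * q.2 := by
    intro q hq
    have h1 : |s * q.2| = |q.2| := by
      rcases lt_or_gt_of_ne hy with hneg | hpos
      · rw [hs_def, Real.sign_of_neg hneg, abs_mul]; simp
      · rw [hs_def, Real.sign_of_pos hpos, abs_mul]; simp
    rw [← h1, abs_of_pos hq.1]
  set f : ℝ × ℝ → ℝ := fun q => |q.2| - l + l*q.1 - q.1 * Real.log (q.1 + |q.2|) with hf_def
  set F : ℝ × ℝ → ℝ := fun q => s * q.2 - l + l*q.1 - q.1 * Real.log (q.1 + s * q.2) with hF_def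
  have hfF : ∀ p ∈ V, f =ᶠ[nhds p] F := by
    intro p hp
    filter_upwards [hVopen.mem_nhds hp] with q hq
    simp only [hf_def, hF_def, habs q hq]
  set G : ℝ × ℝ → ℝ := fun p =>
    s*k + l*h - (p.1 * ((p.1 + s*p.2)⁻¹ * (h + s*k)) + Real.log (p.1 + s*p.2) * h) with hG_def
  have hinner : ∀ p ∈ V, fderiv ℝ f p (h, k) = G p := by
    intro p hp
    have hne : p.1 + s * p.2 ≠ 0 := ne_of_gt hp.2
    have hu : HasFDerivAt (fun q : ℝ × ℝ => q.1 + s * q.2)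
        (ContinuousLinearMap.fst ℝ ℝ ℝ + s • ContinuousLinearMap.snd ℝ ℝ ℝ) p :=
      hasFDerivAt_fst.add (hasFDerivAt_snd.const_mul s)
    have hF' : HasFDerivAt F
        ((s • ContinuousLinearMap.snd ℝ ℝ ℝ + l • ContinuousLinearMap.fst ℝ ℝ ℝ)
          - (p.1 • ((p.1 + s * p.2)⁻¹ • (ContinuousLinearMap.fst ℝ ℝ ℝ + s • ContinuousLinearMap.snd ℝ ℝ ℝ))
            + Real.log (p.1 + s * p.2) • ContinuousLinearMap.fst ℝ ℝ ℝ)) p := by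
      exact (((hasFDerivAt_snd.const_mul s).sub_const l).add (hasFDerivAt_fst.const_mul l)).sub
        (hasFDerivAt_fst.mul (hu.log hne))
    have hf' := hF'.congr_of_eventuallyEq (hfF p hp)
    rw [hf'.fderiv]
    simp only [ContinuousLinearMap.coe_sub', ContinuousLinearMap.coe_add', Pi.sub_apply,
      Pi.add_apply, ContinuousLinearMap.coe_smul', Pi.smul_apply,
      ContinuousLinearMap.coe_fst', ContinuousLinearMap.coe_snd', smul_eq_mul, hG_def]
  have hev2 : (fun p : ℝ × ℝ => fderiv ℝ f p (h, k)) =ᶠ[nhds (x, y)] G := by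
    filter_upwards [hVopen.mem_nhds hxyV] with p hp using hinner p hp
  have houter : fderiv ℝ (fun p : ℝ × ℝ => fderiv ℝ f p (h, k)) (x, y) = fderiv ℝ G (x, y) :=
    hev2.fderiv_eq
  have hne : x + s * y ≠ 0 := by rw [hsy]; exact ne_of_gt hu0
  have hu : HasFDerivAt (fun q : ℝ × ℝ => q.1 + s * q.2)
      (ContinuousLinearMap.fst ℝ ℝ ℝ + s • ContinuousLinearMap.snd ℝ ℝ ℝ) ((x, y) : ℝ × ℝ) :=
    hasFDerivAt_fst.add (hasFDerivAt_snd.const_mul s)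
  have hinv : HasFDerivAt (fun q : ℝ × ℝ => (q.1 + s * q.2)⁻¹)
      ((-((x + s*y)^2)⁻¹) • (ContinuousLinearMap.fst ℝ ℝ ℝ + s • ContinuousLinearMap.snd ℝ ℝ ℝ))
      ((x, y) : ℝ × ℝ) :=
    (hasDerivAt_inv hne).comp_hasFDerivAt (x, y) hu
  have hG' : HasFDerivAt G
      ((0 : ℝ × ℝ →L[ℝ] ℝ) -
        ((x • ((h + s*k) • ((-((x + s*y)^2)⁻¹) • (ContinuousLinearMap.fst ℝ ℝ ℝ + s • ContinuousLinearMap.snd ℝ ℝ ℝ)))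
            + ((x + s*y)⁻¹ * (h + s*k)) • ContinuousLinearMap.fst ℝ ℝ ℝ)
          + h • ((x + s*y)⁻¹ • (ContinuousLinearMap.fst ℝ ℝ ℝ + s • ContinuousLinearMap.snd ℝ ℝ ℝ)))) ((x, y) : ℝ × ℝ) :=
    (hasFDerivAt_const (s*k + l*h) _).sub
      ((hasFDerivAt_fst.mul (hinv.mul_const (h + s*k))).add ((hu.log hne).mul_const h))
  have hval : (fderiv ℝ G (x, y)) (h, k)
      = x * (h + s*k)^2 / (x + s*y)^2 - 2*h*(h + s*k)/(x + s*y) := by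
    rw [hG'.fderiv]
    simp only [ContinuousLinearMap.coe_sub', ContinuousLinearMap.coe_add', Pi.sub_apply,
      Pi.add_apply, ContinuousLinearMap.coe_smul', Pi.smul_apply, ContinuousLinearMap.zero_apply,
      ContinuousLinearMap.coe_fst', ContinuousLinearMap.coe_snd', smul_eq_mul]
    field_simp
    ring
  have heq : x * (h + s*k)^2 / (x + s*y)^2 - 2*h*(h + s*k)/(x + s*y)
      = -(x + s*y)⁻¹ * (h^2 - k^2) - (s*y) / (x + s*y)^2 * (h + s*k)^2 := by
    have hne2 : (x + s*y)^2 ≠ 0 := pow_ne_zero 2 hne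
    have hc2 : (h + s*k)^2 - 2*h*(h + s*k) = k^2 - h^2 := by linear_combination k^2 * hs2
    have hnum : x*(h + s*k)^2 - 2*h*(h + s*k)*(x + s*y)
        = -(x + s*y)*(h^2 - k^2) - (s*y)*(h + s*k)^2 := by
      linear_combination (x + s*y) * hc2
    have h1 : x*(h + s*k)^2/(x + s*y)^2 - 2*h*(h + s*k)/(x + s*y)
        = (x*(h + s*k)^2 - 2*h*(h + s*k)*(x + s*y))/(x + s*y)^2 := by
      field_simp
    have h2 : -(x + s*y)⁻¹*(h^2 - k^2) - (s*y)/(x + s*y)^2*(h + s*k)^2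
        = (-(x + s*y)*(h^2 - k^2) - (s*y)*(h + s*k)^2)/(x + s*y)^2 := by
      field_simp
    rw [h1, h2, hnum]
  rw [houter, hval, ← hsy]
  refine ⟨heq, ?_⟩
  rw [heq]
  have h1 : 0 ≤ (s*y) / (x + s*y)^2 * (h + s*k)^2 := by
    rw [hsy]
    positivity
  linarith
end

section
/- Let ε be a Rademacher random variable (P(ε=1)=P(ε=-1)=1/2). Define the two-step martingale f_0 = g_0 = 1/2, f_1 = 1/2 + ε/2, g_1 = 1/2 - ε/2 (so g_1 - g_0 = -(f_1 - f_0)). Then f takes values in [0,1], g is differentially subordinate to f (|g_0| ≤ |f_0| and |dg_1| = |df_1|), E[f_1] = 1/2, and E[|g_1|·(1 - f_1)] = 1/2 = E[f_1]·ln(e/(2·E[f_1])). -/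
open MeasureTheory

theorem rademacher_example {Ω : Type*} [MeasurableSpace Ω] (μ : Measure Ω)
    [IsProbabilityMeasure μ] (e : Ω → ℝ) (he : Measurable e)
    (h1 : μ {ω | e ω = 1} = 1/2) (h2 : μ {ω | e ω = -1} = 1/2) :
    (∀ᵐ ω ∂μ, (1/2 + e ω / 2) ∈ Set.Icc (0:ℝ) 1) ∧
    (∀ ω, |(1/2 - e ω / 2) - 1/2| = |(1/2 + e ω / 2) - 1/2|) ∧
    (∫ ω, (1/2 + e ω / 2) ∂μ = 1/2) ∧
    (∫ ω, |1/2 - e ω / 2| * (1 - (1/2 + e ω / 2)) ∂μ = 1/2) ∧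
    ((1/2 : ℝ) = (∫ ω, (1/2 + e ω / 2) ∂μ) *
        Real.log (Real.exp 1 / (2 * ∫ ω, (1/2 + e ω / 2) ∂μ))) := by
  set A := {ω | e ω = 1} with hAdef
  set B := {ω | e ω = -1} with hBdef
  have hAm : MeasurableSet A := he (measurableSet_singleton 1)
  have hBm : MeasurableSet B := he (measurableSet_singleton (-1))
  have hdisj : Disjoint A B := by
    rw [Set.disjoint_left]
    rintro ω hω1 hω2
    have : e ω = 1 := hω1
    have : e ω = -1 := hω2
    linarith
  have hunion : μ (A ∪ B) = 1 := by
    rw [measure_union hdisj hBm, h1, h2]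
    norm_num
    exact ENNReal.inv_two_add_inv_two
  have hcompl : μ ((A ∪ B)ᶜ) = 0 := by
    rw [measure_compl (hAm.union hBm) (measure_ne_top μ _), hunion, measure_univ]
    simp
  have hAE : ∀ᵐ ω ∂μ, e ω = 1 ∨ e ω = -1 := by
    rw [ae_iff]
    convert hcompl using 2
    rw [hAdef, hBdef]; ext ω; simp
  have heq1 : (fun ω => 1/2 + e ω / 2) =ᵐ[μ] A.indicator (fun _ => (1:ℝ)) := by
    filter_upwards [hAE] with ω h
    rcases h with h | h
    · have : ω ∈ A := h
      simp [Set.indicator_of_mem this, h]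
      norm_num
    · have : ω ∉ A := by norm_num [hAdef, Set.mem_setOf_eq, h]
      simp [Set.indicator_of_notMem this, h]
      norm_num
  have heq2 : (fun ω => |1/2 - e ω / 2| * (1 - (1/2 + e ω / 2))) =ᵐ[μ]
      B.indicator (fun _ => (1:ℝ)) := by
    filter_upwards [hAE] with ω h
    rcases h with h | h
    · have : ω ∉ B := by norm_num [hBdef, Set.mem_setOf_eq, h]
      simp [Set.indicator_of_notMem this, h]
    · have : ω ∈ B := h
      simp [Set.indicator_of_mem this, h]
      norm_num
  have hint1 : ∫ ω, (1/2 + e ω / 2) ∂μ = 1/2 := by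
    rw [integral_congr_ae heq1, integral_indicator_const _ hAm, measureReal_def, h1]
    simp [ENNReal.toReal_div]
  have hint2 : ∫ ω, |1/2 - e ω / 2| * (1 - (1/2 + e ω / 2)) ∂μ = 1/2 := by
    rw [integral_congr_ae heq2, integral_indicator_const _ hBm, measureReal_def, h2]
    simp [ENNReal.toReal_div]
  refine ⟨?_, ?_, hint1, hint2, ?_⟩
  · filter_upwards [hAE] with ω h
    rcases h with h | h <;> rw [h] <;> norm_num
  · intro ω
    have : (1/2 - e ω / 2) - 1/2 = -((1/2 + e ω / 2) - 1/2) := by ring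
    rw [this, abs_neg]
  · rw [hint1]
    norm_num [Real.log_exp]
end
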